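/- Let X = ℝⁿ, let X_a, X_b be subspaces with X_a ∩ X_b = {0} and X^a ⊕ X^b = X (orthocomplements). For any μ > 0 there is C > 0 such that for all w ∈ X, ⟨w^b⟩^{-μ} ≤ C · ⟨w_a⟩^{-μ} · ⟨w^a⟩^{μ}, where w_a is the orthogonal projection of w onto X_a and w^a, w^b onto X^a, X^b. -/

import Mathlib

lemma aux_bracket {a b d c : ℝ} (ha : 0 ≤ a) (hb : 0 ≤ b) (hd : 0 ≤ d) (hc : 1 ≤ c)
    (h : a ≤ c * (b + d)) :
    Real.sqrt (1 + a ^ 2) ≤ (2 * c) * (Real.sqrt (1 + b ^ 2) * Real.sqrt (1 + d ^ 2)) := by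
  have hB : Real.sqrt (1 + b ^ 2) ^ 2 = 1 + b ^ 2 := Real.sq_sqrt (by positivity)
  have hD : Real.sqrt (1 + d ^ 2) ^ 2 = 1 + d ^ 2 := Real.sq_sqrt (by positivity)
  have hA : Real.sqrt (1 + a ^ 2) ^ 2 = 1 + a ^ 2 := Real.sq_sqrt (by positivity)
  have h2 : Real.sqrt (1 + a ^ 2) ^ 2 ≤ ((2 * c) * (Real.sqrt (1 + b ^ 2) * Real.sqrt (1 + d ^ 2))) ^ 2 := by
    have : ((2 * c) * (Real.sqrt (1 + b ^ 2) * Real.sqrt (1 + d ^ 2))) ^ 2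
        = 4 * c ^ 2 * ((1 + b ^ 2) * (1 + d ^ 2)) := by ring_nf; rw [hB, hD]; ring
    rw [hA, this]
    nlinarith [sq_nonneg (b - d), sq_nonneg (b * d), mul_nonneg hb hd, sq_nonneg a,
      mul_le_mul h h (by positivity) (by positivity : (0:ℝ) ≤ c * (b + d))]
  exact (pow_le_pow_iff_left₀ (Real.sqrt_nonneg _) (by positivity) two_ne_zero).mp h2

lemma aux_anti (n : ℕ) (Xa Xb : Submodule ℝ (EuclideanSpace ℝ (Fin n)))
    (hab : Xa ⊓ Xb = ⊥) :
    ∃ c : ℝ, 1 ≤ c ∧ ∀ v ∈ Xa,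
      ‖v‖ ≤ c * ‖(Submodule.orthogonalProjection Xbᗮ v : EuclideanSpace ℝ (Fin n))‖ := by
  set X := EuclideanSpace ℝ (Fin n)
  let f : Xa →ₗ[ℝ] Xbᗮ := (Submodule.orthogonalProjection Xbᗮ).toLinearMap.comp Xa.subtype
  have hinj : Function.Injective f := by
    rw [← LinearMap.ker_eq_bot, LinearMap.ker_eq_bot']
    intro v hv
    have hv' : Xbᗮ.orthogonalProjectionOnto (v : X) = 0 := hv
    rw [Submodule.orthogonalProjectionOnto_eq_zero_iff, Submodule.orthogonal_orthogonal] at hv'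
    have : (v : X) ∈ Xa ⊓ Xb := ⟨v.2, hv'⟩
    rw [hab] at this
    exact Subtype.ext this
  let e : Xa ≃ₗ[ℝ] LinearMap.range f := LinearEquiv.ofInjective f hinj
  let e' := e.toContinuousLinearEquiv
  refine ⟨max ‖(e'.symm : LinearMap.range f →L[ℝ] Xa)‖ 1, le_max_right _ _, ?_⟩
  intro v hv
  have h1 : ‖(⟨v, hv⟩ : Xa)‖ ≤ ‖(e'.symm : LinearMap.range f →L[ℝ] Xa)‖ * ‖e' ⟨v, hv⟩‖ := by
    calc ‖(⟨v, hv⟩ : Xa)‖ = ‖e'.symm (e' ⟨v, hv⟩)‖ := by rw [e'.symm_apply_apply]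
    _ ≤ _ := (e'.symm : LinearMap.range f →L[ℝ] Xa).le_opNorm _
  have h2 : ‖e' ⟨v, hv⟩‖ = ‖(Submodule.orthogonalProjection Xbᗮ v : X)‖ := by
    have : ((e' ⟨v, hv⟩ : LinearMap.range f) : Xbᗮ) = f ⟨v, hv⟩ := by
      simp [e', e, LinearEquiv.coe_toContinuousLinearEquiv']
    rw [show ‖e' ⟨v, hv⟩‖ = ‖((e' ⟨v, hv⟩ : LinearMap.range f) : Xbᗮ)‖ from rfl, this]
    rfl
  have h3 : ‖(⟨v, hv⟩ : Xa)‖ = ‖v‖ := rfl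
  rw [h3, h2] at h1
  calc ‖v‖ ≤ _ := h1
  _ ≤ max ‖(e'.symm : LinearMap.range f →L[ℝ] Xa)‖ 1 * ‖(Submodule.orthogonalProjection Xbᗮ v : X)‖ := by
      gcongr; exact le_max_left _ _


private theorem stmt1' (n : ℕ) (Xa Xb : Submodule ℝ (EuclideanSpace ℝ (Fin n)))
    (hab : Xa ⊓ Xb = ⊥) (hsum : Xaᗮ ⊔ Xbᗮ = ⊤) (μ : ℝ) (hμ : 0 < μ) :
    ∃ C : ℝ, 0 < C ∧ ∀ w : EuclideanSpace ℝ (Fin n),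
      Real.sqrt (1 + ‖(Submodule.orthogonalProjection Xbᗮ w : EuclideanSpace ℝ (Fin n))‖ ^ 2) ^ (-μ) ≤
      C * Real.sqrt (1 + ‖(Submodule.orthogonalProjection Xa w : EuclideanSpace ℝ (Fin n))‖ ^ 2) ^ (-μ) *
        Real.sqrt (1 + ‖(Submodule.orthogonalProjection Xaᗮ w : EuclideanSpace ℝ (Fin n))‖ ^ 2) ^ μ := by
  set X := EuclideanSpace ℝ (Fin n)
  obtain ⟨c, hc1, hc⟩ := aux_anti n Xa Xb hab
  refine ⟨(2 * c) ^ μ, Real.rpow_pos_of_pos (by linarith) μ, fun w => ?_⟩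
  set wa : X := (Submodule.orthogonalProjection Xa w : X)
  set wA : X := (Submodule.orthogonalProjection Xaᗮ w : X)
  set wb : X := (Submodule.orthogonalProjection Xbᗮ w : X)
  -- key norm estimate
  have hdecomp : wa = w - wA := by
    have := Submodule.starProjection_add_starProjection_orthogonal (K := Xa) w
    exact eq_sub_of_add_eq this
  have hcontr : ∀ x : X, ‖(Submodule.orthogonalProjection Xbᗮ x : X)‖ ≤ ‖x‖ := by
    intro x
    calc ‖(Submodule.orthogonalProjection Xbᗮ x : X)‖ = ‖Submodule.orthogonalProjection Xbᗮ x‖ := rfl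
    _ ≤ ‖Submodule.orthogonalProjection Xbᗮ‖ * ‖x‖ := (Submodule.orthogonalProjection Xbᗮ).le_opNorm x
    _ ≤ 1 * ‖x‖ := mul_le_mul_of_nonneg_right (Submodule.orthogonalProjectionOnto_norm_le _) (norm_nonneg x)
    _ = ‖x‖ := one_mul _
  have hkey : ‖wa‖ ≤ c * (‖wb‖ + ‖wA‖) := by
    have h1 : ‖wa‖ ≤ c * ‖(Submodule.orthogonalProjection Xbᗮ wa : X)‖ :=
      hc wa (Submodule.orthogonalProjection Xa w).2
    have h2 : (Submodule.orthogonalProjection Xbᗮ wa : X) = wb - (Submodule.orthogonalProjection Xbᗮ wA : X) := by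
      rw [hdecomp, map_sub]; push_cast; rfl
    have h3 : ‖(Submodule.orthogonalProjection Xbᗮ wa : X)‖ ≤ ‖wb‖ + ‖wA‖ := by
      rw [h2]
      calc ‖wb - (Submodule.orthogonalProjection Xbᗮ wA : X)‖
          ≤ ‖wb‖ + ‖(Submodule.orthogonalProjection Xbᗮ wA : X)‖ := norm_sub_le _ _
      _ ≤ ‖wb‖ + ‖wA‖ := add_le_add_right (hcontr wA) _
    calc ‖wa‖ ≤ c * ‖(Submodule.orthogonalProjection Xbᗮ wa : X)‖ := h1
    _ ≤ c * (‖wb‖ + ‖wA‖) := mul_le_mul_of_nonneg_left h3 (by linarith)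
  set A := Real.sqrt (1 + ‖wa‖ ^ 2)
  set B := Real.sqrt (1 + ‖wb‖ ^ 2)
  set D := Real.sqrt (1 + ‖wA‖ ^ 2)
  have hbr : A ≤ (2 * c) * (B * D) :=
    aux_bracket (norm_nonneg _) (norm_nonneg _) (norm_nonneg _) hc1 hkey
  have hApos : 0 < A := Real.sqrt_pos.mpr (by positivity)
  have hBpos : 0 < B := Real.sqrt_pos.mpr (by positivity)
  have hDpos : 0 < D := Real.sqrt_pos.mpr (by positivity)
  have hrp : A ^ μ ≤ (2 * c) ^ μ * (B ^ μ * D ^ μ) := by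
    calc A ^ μ ≤ ((2 * c) * (B * D)) ^ μ :=
      Real.rpow_le_rpow hApos.le hbr hμ.le
    _ = (2 * c) ^ μ * (B * D) ^ μ := Real.mul_rpow (by linarith) (by positivity)
    _ = (2 * c) ^ μ * (B ^ μ * D ^ μ) := by rw [Real.mul_rpow hBpos.le hDpos.le]
  have hAμ : 0 < A ^ μ := Real.rpow_pos_of_pos hApos μ
  have hBμ : 0 < B ^ μ := Real.rpow_pos_of_pos hBpos μ
  have hCμ : 0 < (2 * c) ^ μ := Real.rpow_pos_of_pos (by linarith) μ
  have hDμ : 0 < D ^ μ := Real.rpow_pos_of_pos hDpos μ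
  rw [Real.rpow_neg hBpos.le, Real.rpow_neg hApos.le, inv_eq_one_div,
    show (2 * c) ^ μ * (A ^ μ)⁻¹ * D ^ μ = (2 * c) ^ μ * D ^ μ / A ^ μ by ring,
    div_le_div_iff₀ hBμ hAμ]
  nlinarith [hrp, mul_pos hBμ hDμ]



/-- In `ℝⁿ`, with subspaces `Xa, Xb` such that `Xa ⊓ Xb = ⊥` and
`Xaᗮ ⊔ Xbᗮ = ⊤`, for any `μ > 0` there is `C > 0` such that
`⟨w^b⟩^{-μ} ≤ C ⟨w_a⟩^{-μ} ⟨w^a⟩^{μ}` for all `w`, where `w_a` is the orthogonal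
projection onto `Xa` and `w^a, w^b` those onto `Xaᗮ, Xbᗮ`. -/
theorem stmt1 (n : ℕ) (Xa Xb : Submodule ℝ (EuclideanSpace ℝ (Fin n)))
    (hab : Xa ⊓ Xb = ⊥) (hsum : Xaᗮ ⊔ Xbᗮ = ⊤) (μ : ℝ) (hμ : 0 < μ) :
    ∃ C : ℝ, 0 < C ∧ ∀ w : EuclideanSpace ℝ (Fin n),
      Real.sqrt (1 + ‖(Submodule.orthogonalProjection Xbᗮ w : EuclideanSpace ℝ (Fin n))‖ ^ 2) ^ (-μ) ≤
      C * Real.sqrt (1 + ‖(Submodule.orthogonalProjection Xa w : EuclideanSpace ℝ (Fin n))‖ ^ 2) ^ (-μ) *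
        Real.sqrt (1 + ‖(Submodule.orthogonalProjection Xaᗮ w : EuclideanSpace ℝ (Fin n))‖ ^ 2) ^ μ := by
  exact stmt1' n Xa Xb hab hsum μ hμ
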